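/- For x in (-1,1), (arcsin x)² = ∑_{n=1}^∞ (2x)^{2n} / (2·n²·C(2n,n)). -/

import Mathlib

open Real

noncomputable def bb (n : ℕ) : ℝ := 4 ^ n / ((2 * n + 1) * Nat.centralBinom n)

lemma cb_pos (n : ℕ) : (0:ℝ) < Nat.centralBinom n := by
  exact_mod_cast Nat.centralBinom_pos n

lemma four_pow_le (n : ℕ) : 4 ^ n ≤ (2 * n + 1) * Nat.centralBinom n := by
  induction n with
  | zero => simp [Nat.centralBinom]
  | succ n ih =>
    have h := Nat.succ_mul_centralBinom_succ n
    calc 4 ^ (n+1) = 4 * 4 ^ n := by ring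
    _ ≤ 4 * ((2 * n + 1) * Nat.centralBinom n) := by omega
    _ = 2 * ((n + 1) * Nat.centralBinom (n+1)) := by rw [h]; ring
    _ ≤ (2 * (n+1) + 1) * Nat.centralBinom (n+1) := by
        have := Nat.centralBinom_pos (n+1); nlinarith

lemma bb_pos (n : ℕ) : 0 < bb n := by
  have := cb_pos n
  apply div_pos (by positivity)
  positivity

lemma bb_le_one (n : ℕ) : bb n ≤ 1 := by
  have hc := cb_pos n
  rw [bb, div_le_one (by positivity)]
  calc (4:ℝ) ^ n = ((4 ^ n : ℕ) : ℝ) := by push_cast; ring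
  _ ≤ (((2 * n + 1) * Nat.centralBinom n : ℕ) : ℝ) := by exact_mod_cast four_pow_le n
  _ = (2 * n + 1) * Nat.centralBinom n := by push_cast; ring

-- recurrence: (2(n+1)+1) * bb (n+1) = (2n+2) * bb n
lemma bb_rec (n : ℕ) : (2 * (n+1) + 1) * bb (n+1) = (2 * n + 2) * bb n := by
  have h : ((n:ℝ) + 1) * Nat.centralBinom (n+1) = 2 * (2 * n + 1) * Nat.centralBinom n := by
    exact_mod_cast congrArg (Nat.cast (R := ℝ)) (Nat.succ_mul_centralBinom_succ n)
  have h1 := cb_pos n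
  have h2 := cb_pos (n+1)
  rw [bb, bb]
  field_simp
  push_cast
  linear_combination (-(2*(n:ℝ)+3)) * 4^n * 2 * h

noncomputable def Tf (x : ℝ) : ℝ := ∑' n : ℕ, bb n * x ^ (2 * n + 1)
noncomputable def Uf (x : ℝ) : ℝ := ∑' n : ℕ, ((2 * n + 1) * bb n) * x ^ (2 * n)

lemma summable_T {x : ℝ} (hx : |x| < 1) : Summable (fun n : ℕ => bb n * x ^ (2 * n + 1)) := by
  have hx2 : x ^ 2 < 1 := by nlinarith [abs_nonneg x, sq_abs x]
  apply Summable.of_norm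
  refine Summable.of_nonneg_of_le (fun n => norm_nonneg _) (fun n => ?_)
    (summable_geometric_of_lt_one (by positivity) hx2)
  rw [norm_mul, Real.norm_eq_abs, Real.norm_eq_abs, abs_of_pos (bb_pos n), abs_pow]
  have h1 : |x| ^ (2 * n + 1) ≤ |x| ^ (2 * n) := by
    apply pow_le_pow_of_le_one (abs_nonneg x) hx.le
    omega
  calc bb n * |x| ^ (2 * n + 1) ≤ 1 * |x| ^ (2 * n) :=
        mul_le_mul (bb_le_one n) h1 (by positivity) (by norm_num)
    _ = (x ^ 2) ^ n := by rw [one_mul, pow_mul, sq_abs]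

lemma summable_U {x : ℝ} (hx : |x| < 1) :
    Summable (fun n : ℕ => ((2 * n + 1) * bb n) * x ^ (2 * n)) := by
  have hx2 : x ^ 2 < 1 := by nlinarith [abs_nonneg x, sq_abs x]
  have hg : Summable (fun n : ℕ => (2 * (n:ℝ) + 1) * (x ^ 2) ^ n) := by
    have h1 := (summable_pow_mul_geometric_of_norm_lt_one (R := ℝ) 1
      (r := x ^ 2) (by rw [Real.norm_eq_abs, abs_pow, sq_abs]; nlinarith [abs_nonneg x, sq_abs x])).mul_left 2
    have h2 := summable_geometric_of_lt_one (r := x ^ 2) (by positivity) hx2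
    exact (h1.add h2).congr (fun n => by simp [pow_one]; ring)
  apply Summable.of_norm
  refine Summable.of_nonneg_of_le (fun n => norm_nonneg _) (fun n => ?_) hg
  rw [norm_mul, norm_mul, Real.norm_eq_abs, Real.norm_eq_abs, Real.norm_eq_abs,
    abs_of_pos (bb_pos n), abs_of_pos (show (0:ℝ) < 2 * n + 1 by positivity), abs_pow]
  have h2 : |x| ^ (2 * n) = (x ^ 2) ^ n := by rw [pow_mul, sq_abs]
  rw [h2]
  have : (2 * (n:ℝ) + 1) * bb n ≤ (2 * n + 1) * 1 :=
    mul_le_mul_of_nonneg_left (bb_le_one n) (by positivity)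
  nlinarith [pow_nonneg (sq_nonneg x) n, this]

lemma summable_poly_geo {r : ℝ} (h0 : 0 ≤ r) (h1 : r < 1) :
    Summable (fun n : ℕ => (2 * (n:ℝ) + 1) * r ^ n) := by
  have h1' := (summable_pow_mul_geometric_of_norm_lt_one (R := ℝ) 1
    (r := r) (by rwa [Real.norm_eq_abs, abs_of_nonneg h0])).mul_left 2
  exact (h1'.add (summable_geometric_of_lt_one h0 h1)).congr (fun n => by simp [pow_one]; ring)

lemma T_hasDerivAt {x : ℝ} (hx : |x| < 1) : HasDerivAt Tf (Uf x) x := by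
  set r : ℝ := (|x| + 1) / 2 with hr
  have hax := abs_nonneg x
  have hr0 : (0:ℝ) ≤ r := by positivity
  have hr1 : r < 1 := by rw [hr]; linarith
  have hxr : |x| < r := by rw [hr]; linarith
  have hu : Summable (fun n : ℕ => (2 * (n:ℝ) + 1) * (r ^ 2) ^ n) :=
    summable_poly_geo (by positivity) (by nlinarith)
  have := hasDerivAt_tsum_of_isPreconnected hu Metric.isOpen_ball
    (convex_ball (0:ℝ) r).isPreconnected
    (g := fun n y => bb n * y ^ (2 * n + 1))
    (g' := fun n y => ((2 * n + 1) * bb n) * y ^ (2 * n))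
    (y₀ := 0) (y := x)
    (fun n y _ => by
      have h := (hasDerivAt_pow (2 * n + 1) y).const_mul (bb n)
      refine h.congr_deriv (Eq.symm ?_)
      simp
      ring)
    (fun n y hy => by
      rw [Metric.mem_ball, dist_zero_right, Real.norm_eq_abs] at hy
      rw [norm_mul, norm_mul, Real.norm_eq_abs, Real.norm_eq_abs, Real.norm_eq_abs,
        abs_of_pos (bb_pos n), abs_of_pos (show (0:ℝ) < 2 * n + 1 by positivity), abs_pow]
      have h1 : (2 * (n:ℝ) + 1) * bb n ≤ (2 * n + 1) * 1 :=
        mul_le_mul_of_nonneg_left (bb_le_one n) (by positivity)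
      have h2 : |y| ^ (2 * n) ≤ (r ^ 2) ^ n := by
        rw [pow_mul, sq_abs]
        exact pow_le_pow_left₀ (sq_nonneg y) (by nlinarith [abs_nonneg y, sq_abs y]) n
      nlinarith [pow_nonneg (abs_nonneg y) (2 * n), pow_nonneg (mul_nonneg hr0 hr0) n,
        pow_nonneg (sq_nonneg r) n])
    (Metric.mem_ball_self (by positivity))
    (by
      apply summable_zero.congr
      intro n
      simp)
    (by rw [Metric.mem_ball, dist_zero_right, Real.norm_eq_abs]; exact hxr)
  exact this

lemma U_eq {x : ℝ} (hx : |x| < 1) : (1 - x ^ 2) * Uf x = 1 + x * Tf x := by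
  have hT := summable_T hx
  have hU := summable_U hx
  have expand : ∑' n : ℕ, ((2 * ((n:ℝ) + 1) + 1) * bb (n + 1)) * x ^ (2 * (n + 1))
      = x ^ 2 * Uf x + x * Tf x := by
    simp only [Uf, Tf]
    rw [← tsum_mul_left, ← tsum_mul_left, ← Summable.tsum_add (hU.mul_left _) (hT.mul_left _)]
    apply tsum_congr
    intro n
    have hrec := bb_rec n
    push_cast at hrec ⊢
    linear_combination (x ^ (2 * (n + 1))) * hrec
  have key : Uf x = 1 + ∑' n : ℕ, ((2 * ((n:ℝ) + 1) + 1) * bb (n + 1)) * x ^ (2 * (n + 1)) := by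
    rw [Uf, Summable.tsum_eq_zero_add hU]
    congr 1
    · norm_num [bb, Nat.centralBinom]
    · apply tsum_congr; intro n; push_cast; ring
  rw [expand] at key
  nlinarith [key]

noncomputable def Ff (y : ℝ) : ℝ := Real.sqrt (1 - y ^ 2) * Tf y - Real.arcsin y

lemma sqrt_deriv {y : ℝ} (hy : y ∈ Set.Ioo (-1:ℝ) 1) :
    HasDerivAt (fun z : ℝ => Real.sqrt (1 - z ^ 2)) (-y / Real.sqrt (1 - y ^ 2)) y := by
  have h1 : (0:ℝ) < 1 - y ^ 2 := by nlinarith [hy.1, hy.2]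
  have hs : (0:ℝ) < Real.sqrt (1 - y ^ 2) := Real.sqrt_pos.mpr h1
  have hinner : HasDerivAt (fun z : ℝ => 1 - z ^ 2) (-(2 * y)) y := by
    simpa using (hasDerivAt_pow 2 y).const_sub 1
  have := (Real.hasDerivAt_sqrt (ne_of_gt h1)).comp y hinner
  refine this.congr_deriv (Eq.symm ?_)
  field_simp

lemma F_deriv {y : ℝ} (hy : y ∈ Set.Ioo (-1:ℝ) 1) : HasDerivAt Ff 0 y := by
  have hys : |y| < 1 := abs_lt.mpr ⟨hy.1, hy.2⟩
  have h1 : (0:ℝ) < 1 - y ^ 2 := by nlinarith [hy.1, hy.2]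
  have hs : (0:ℝ) < Real.sqrt (1 - y ^ 2) := Real.sqrt_pos.mpr h1
  have hsq : Real.sqrt (1 - y ^ 2) ^ 2 = 1 - y ^ 2 := Real.sq_sqrt h1.le
  have hT := T_hasDerivAt hys
  have hprod := (sqrt_deriv hy).mul hT
  have harc := Real.hasDerivAt_arcsin (ne_of_gt hy.1) (ne_of_lt hy.2)
  have hsub := hprod.sub harc
  have hU := U_eq hys
  refine hsub.congr_deriv (Eq.symm ?_)
  have hne : Real.sqrt (1 - y ^ 2) ≠ 0 := ne_of_gt hs
  field_simp
  linear_combination -(Uf y * hsq) - hU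

lemma T_eq {y : ℝ} (hy : y ∈ Set.Ioo (-1:ℝ) 1) :
    Real.sqrt (1 - y ^ 2) * Tf y = Real.arcsin y := by
  have h0 : (0:ℝ) ∈ Set.Ioo (-1:ℝ) 1 := by norm_num
  have hconst : Ff y = Ff 0 := by
    apply (convex_Ioo (-1:ℝ) 1).is_const_of_fderivWithin_eq_zero
      (fun z hz => ((F_deriv hz).differentiableAt).differentiableWithinAt)
      (fun z hz => ?_) hy h0
    rw [fderivWithin_of_isOpen isOpen_Ioo hz]
    have h := (F_deriv hz).hasFDerivAt
    rw [h.fderiv]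
    ext t
    simp
  have hF0 : Ff 0 = 0 := by
    have h : (fun n : ℕ => bb n * (0:ℝ) ^ (2 * n + 1)) = fun _ => (0:ℝ) := by
      funext n; simp
    have : Tf 0 = 0 := by rw [Tf, h, tsum_zero]
    simp [Ff, this]
  have := hconst.trans hF0
  rw [Ff] at this
  linarith [this]

noncomputable def Sf (x : ℝ) : ℝ :=
  ∑' n : ℕ, (bb n / ((n:ℝ) + 1)) * x ^ (2 * n + 2)

lemma cS_le_one (n : ℕ) : bb n / ((n:ℝ) + 1) ≤ 1 := by
  rw [div_le_one (by positivity)]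
  calc bb n ≤ 1 := bb_le_one n
  _ ≤ (n:ℝ) + 1 := by have : (0:ℝ) ≤ n := Nat.cast_nonneg n; linarith

lemma summable_S {x : ℝ} (hx : |x| < 1) :
    Summable (fun n : ℕ => (bb n / ((n:ℝ) + 1)) * x ^ (2 * n + 2)) := by
  have hx2 : x ^ 2 < 1 := by nlinarith [abs_nonneg x, sq_abs x]
  apply Summable.of_norm
  refine Summable.of_nonneg_of_le (fun n => norm_nonneg _) (fun n => ?_)
    ((summable_geometric_of_lt_one (r := x ^ 2) (by positivity) hx2).mul_left (x ^ 2))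
  rw [norm_mul, Real.norm_eq_abs, Real.norm_eq_abs, abs_of_pos (div_pos (bb_pos n) (by positivity)),
    abs_pow]
  have h2 : |x| ^ (2 * n + 2) = (x ^ 2) ^ n * x ^ 2 := by
    rw [pow_add, pow_mul, sq_abs]
  rw [h2]
  have := cS_le_one n
  nlinarith [pow_nonneg (sq_nonneg x) n, sq_nonneg x,
    mul_nonneg (pow_nonneg (sq_nonneg x) n) (sq_nonneg x)]

lemma S_term_deriv (n : ℕ) (y : ℝ) :
    HasDerivAt (fun z : ℝ => (bb n / ((n:ℝ) + 1)) * z ^ (2 * n + 2))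
      (2 * (bb n * y ^ (2 * n + 1))) y := by
  have h := (hasDerivAt_pow (2 * n + 2) y).const_mul (bb n / ((n:ℝ) + 1))
  refine h.congr_deriv (Eq.symm ?_)
  have h2 : 2 * n + 2 - 1 = 2 * n + 1 := by omega
  rw [h2]
  push_cast
  field_simp

lemma S_hasDerivAt {x : ℝ} (hx : |x| < 1) : HasDerivAt Sf (2 * Tf x) x := by
  set r : ℝ := (|x| + 1) / 2 with hr
  have hax := abs_nonneg x
  have hr0 : (0:ℝ) ≤ r := by positivity
  have hr1 : r < 1 := by rw [hr]; linarith
  have hxr : |x| < r := by rw [hr]; linarith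
  have hu : Summable (fun n : ℕ => (2 * r) * (r ^ 2) ^ n) :=
    (summable_geometric_of_lt_one (r := r ^ 2) (by positivity) (by nlinarith)).mul_left _
  have key := hasDerivAt_tsum_of_isPreconnected hu Metric.isOpen_ball
    (convex_ball (0:ℝ) r).isPreconnected
    (g := fun n y => (bb n / ((n:ℝ) + 1)) * y ^ (2 * n + 2))
    (g' := fun n y => 2 * (bb n * y ^ (2 * n + 1)))
    (y₀ := 0) (y := x)
    (fun n y _ => S_term_deriv n y)
    (fun n y hy => by
      rw [Metric.mem_ball, dist_zero_right, Real.norm_eq_abs] at hy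
      have hy0 := abs_nonneg y
      rw [norm_mul, norm_mul, Real.norm_eq_abs, Real.norm_eq_abs, Real.norm_eq_abs,
        abs_of_pos (bb_pos n), abs_pow]
      have h1 : |y| ^ (2 * n + 1) ≤ r ^ (2 * n + 1) := by
        exact pow_le_pow_left₀ (abs_nonneg y) hy.le _
      have h2 : r ^ (2 * n + 1) = r * (r ^ 2) ^ n := by
        rw [pow_add, pow_mul, pow_one]; ring
      have h3 : bb n * |y| ^ (2 * n + 1) ≤ 1 * (r * (r ^ 2) ^ n) := by
        apply mul_le_mul (bb_le_one n) (by rw [← h2]; exact h1) (by positivity) (by norm_num)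
      rw [abs_of_nonneg (by norm_num : (0:ℝ) ≤ 2)]
      nlinarith [h3])
    (Metric.mem_ball_self (by positivity))
    (by
      apply summable_zero.congr
      intro n
      simp)
    (by rw [Metric.mem_ball, dist_zero_right, Real.norm_eq_abs]; exact hxr)
  have hT := summable_T hx
  have : ∑' n : ℕ, 2 * (bb n * x ^ (2 * n + 1)) = 2 * Tf x := by
    rw [Tf, tsum_mul_left]
  rw [this] at key
  exact key

lemma S_eq {x : ℝ} (hx : x ∈ Set.Ioo (-1:ℝ) 1) : Sf x = Real.arcsin x ^ 2 := by
  set G : ℝ → ℝ := fun y => Sf y - Real.arcsin y ^ 2 with hG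
  have h0 : (0:ℝ) ∈ Set.Ioo (-1:ℝ) 1 := by norm_num
  have hGd : ∀ y ∈ Set.Ioo (-1:ℝ) 1, HasDerivAt G 0 y := by
    intro y hy
    have hys : |y| < 1 := abs_lt.mpr ⟨hy.1, hy.2⟩
    have h1 : (0:ℝ) < 1 - y ^ 2 := by nlinarith [hy.1, hy.2]
    have hs : (0:ℝ) < Real.sqrt (1 - y ^ 2) := Real.sqrt_pos.mpr h1
    have harc := (Real.hasDerivAt_arcsin (ne_of_gt hy.1) (ne_of_lt hy.2)).pow 2
    have hsub := (S_hasDerivAt hys).sub harc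
    have hTeq := T_eq hy
    refine hsub.congr_deriv (Eq.symm ?_)
    have : Tf y = Real.arcsin y / Real.sqrt (1 - y ^ 2) := by
      rw [eq_div_iff (ne_of_gt hs)]
      linear_combination hTeq
    rw [this]
    field_simp
    norm_num
  have hconst : G x = G 0 := by
    apply (convex_Ioo (-1:ℝ) 1).is_const_of_fderivWithin_eq_zero
      (fun z hz => ((hGd z hz).differentiableAt).differentiableWithinAt)
      (fun z hz => ?_) hx h0
    rw [fderivWithin_of_isOpen isOpen_Ioo hz]
    rw [(hGd z hz).hasFDerivAt.fderiv]
    ext t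
    simp
  have hG0 : G 0 = 0 := by
    have h : (fun n : ℕ => (bb n / ((n:ℝ) + 1)) * (0:ℝ) ^ (2 * n + 2)) = fun _ => (0:ℝ) := by
      funext n; simp
    have hS0 : Sf 0 = 0 := by rw [Sf, h, tsum_zero]
    simp [hG, hS0]
  have := hconst.trans hG0
  rw [hG] at this
  simp at this
  linarith [this]

lemma term_eq (n : ℕ) (y : ℝ) :
    (2 * y) ^ (2 * (n + 1)) / (2 * (n + 1) ^ 2 * Nat.choose (2 * (n + 1)) (n + 1))
      = (bb n / ((n:ℝ) + 1)) * y ^ (2 * n + 2) := by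
  have hC : ((Nat.choose (2 * (n + 1)) (n + 1) : ℕ) : ℝ) = Nat.centralBinom (n + 1) := by
    rw [Nat.centralBinom_eq_two_mul_choose]
  have hid : ((n:ℝ) + 1) * Nat.centralBinom (n + 1) = 2 * (2 * n + 1) * Nat.centralBinom n := by
    exact_mod_cast congrArg (Nat.cast (R := ℝ)) (Nat.succ_mul_centralBinom_succ n)
  have hp : (2 * y) ^ (2 * (n + 1)) = 4 ^ (n + 1) * y ^ (2 * n + 2) := by
    rw [show 2 * (n + 1) = 2 * n + 2 from by omega, mul_pow,
      show (2:ℝ) ^ (2 * n + 2) = 4 ^ (n + 1) from by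
        rw [show 2 * n + 2 = 2 * (n + 1) from by omega, pow_mul]; norm_num]
  have h1 := cb_pos n
  have h2 := cb_pos (n + 1)
  rw [hp, hC, bb]
  have hn1 : ((n:ℝ) + 1) ≠ 0 := by positivity
  field_simp
  linear_combination (-(2:ℝ)) * y ^ (2 * n + 2) * 4 ^ n * hid

theorem stmt9 (x : ℝ) (hx : x ∈ Set.Ioo (-1 : ℝ) 1) :
    HasSum (fun n : ℕ => (2 * x) ^ (2 * (n + 1)) /
        (2 * (n + 1) ^ 2 * Nat.choose (2 * (n + 1)) (n + 1)))
      (Real.arcsin x ^ 2) := by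
  have hx1 : |x| < 1 := abs_lt.mpr ⟨hx.1, hx.2⟩
  have hfe : (fun n : ℕ => (2 * x) ^ (2 * (n + 1)) /
      (2 * (n + 1) ^ 2 * Nat.choose (2 * (n + 1)) (n + 1)))
      = fun n : ℕ => (bb n / ((n:ℝ) + 1)) * x ^ (2 * n + 2) :=
    funext fun n => term_eq n x
  rw [hfe, ← S_eq hx]
  exact (summable_S hx1).hasSum
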